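/- There exists a constant C > 1 such that for all n ≥ 1, C⁻¹ n^{−1/γ} ≤ rₙ ≤ C n^{−1/γ}, where (rₙ) is defined by r₀ = 1 and rₙ₊₁ + rₙ₊₁^{1+γ} = rₙ with rₙ₊₁ ∈ (0, rₙ). -/
import Mathlib

open Real

private lemma bracket_lemma {γ : ℝ} (hγ : 0 < γ) {t : ℝ} (ht : 0 < t) (ht1 : t ≤ 1) :
    1 + min γ (2 ^ γ - 1) * t ≤ (1 + t) ^ γ ∧
      (1 + t) ^ γ ≤ 1 + max γ (2 ^ γ - 1) * t := by
  have h1t : (0:ℝ) ≤ 1 + t := by linarith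
  constructor
  · rcases le_total 1 γ with h | h
    · have := one_add_mul_self_le_rpow_one_add (by linarith : (-1:ℝ) ≤ t) h
      have hm : min γ (2 ^ γ - 1) ≤ γ := min_le_left _ _
      nlinarith
    · have hcc := (Real.concaveOn_rpow hγ.le h).2 (Set.mem_Ici.2 (by norm_num : (0:ℝ) ≤ 1))
        (Set.mem_Ici.2 (by norm_num : (0:ℝ) ≤ 2)) (by linarith : (0:ℝ) ≤ 1 - t) ht.le
        (by ring : (1 - t) + t = 1)
      simp only [smul_eq_mul, Real.one_rpow, mul_one] at hcc
      rw [show 1 - t + t * 2 = 1 + t by ring] at hcc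
      have hm : min γ (2 ^ γ - 1) ≤ 2 ^ γ - 1 := min_le_right _ _
      nlinarith
  · rcases le_total γ 1 with h | h
    · have := rpow_one_add_le_one_add_mul_self (by linarith : (-1:ℝ) ≤ t) hγ.le h
      have hm : γ ≤ max γ (2 ^ γ - 1) := le_max_left _ _
      nlinarith
    · have hcv := (convexOn_rpow h).2 (Set.mem_Ici.2 (by norm_num : (0:ℝ) ≤ 1))
        (Set.mem_Ici.2 (by norm_num : (0:ℝ) ≤ 2)) (by linarith : (0:ℝ) ≤ 1 - t) ht.le
        (by ring : (1 - t) + t = 1)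
      simp only [smul_eq_mul, Real.one_rpow, mul_one] at hcv
      rw [show 1 - t + t * 2 = 1 + t by ring] at hcv
      have hm : 2 ^ γ - 1 ≤ max γ (2 ^ γ - 1) := le_max_right _ _
      nlinarith

/-- Asymptotics rₙ ≍ n^(−1/γ). -/
theorem stmt_5 (γ : ℝ) (hγ : 0 < γ) (r : ℕ → ℝ) (h0 : r 0 = 1)
    (hrec : ∀ n, r (n + 1) ∈ Set.Ioo 0 (r n) ∧ r (n + 1) + r (n + 1) ^ (1 + γ) = r n) :
    ∃ C : ℝ, 1 < C ∧ ∀ n : ℕ, 1 ≤ n →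
      C⁻¹ * (n : ℝ) ^ (-(1 / γ)) ≤ r n ∧ r n ≤ C * (n : ℝ) ^ (-(1 / γ)) := by
  have hpos : ∀ n, 0 < r n := by
    intro n
    cases n with
    | zero => rw [h0]; norm_num
    | succ n => exact (hrec n).1.1
  have hle1 : ∀ n, r n ≤ 1 := by
    intro n
    induction n with
    | zero => rw [h0]
    | succ n ih => exact ((hrec n).1.2.le.trans ih)
  have h2γ : (1:ℝ) < 2 ^ γ := by
    have := Real.rpow_lt_rpow_of_exponent_lt (by norm_num : (1:ℝ) < 2) hγ
    rwa [Real.rpow_zero] at this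
  set c : ℝ := min γ (2 ^ γ - 1) with hc
  set K : ℝ := max γ (2 ^ γ - 1) with hK
  have hcpos : 0 < c := lt_min hγ (by linarith)
  have hKpos : 0 < K := lt_of_lt_of_le hγ (le_max_left _ _)
  have h2γpos : (0:ℝ) < 2 ^ γ := by linarith
  set c₀ : ℝ := c / 2 ^ γ with hc₀
  have hc₀pos : 0 < c₀ := div_pos hcpos h2γpos
  -- step bounds on u n = r n ^ (-γ)
  have hstep : ∀ n, c₀ ≤ r (n+1) ^ (-γ) - r n ^ (-γ) ∧
      r (n+1) ^ (-γ) - r n ^ (-γ) ≤ K := by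
    intro n
    set a := r (n+1) with ha_def
    have ha : 0 < a := (hrec n).1.1
    have ha1 : a < 1 := lt_of_lt_of_le (hrec n).1.2 (hle1 n)
    set t := a ^ γ with ht_def
    have ht : 0 < t := Real.rpow_pos_of_pos ha γ
    have ht1 : t ≤ 1 := Real.rpow_le_one ha.le ha1.le hγ.le
    have hrn : r n = a * (1 + t) := by
      have h1 : a ^ (1 + γ) = a * t := by
        rw [Real.rpow_add ha, Real.rpow_one]
      have := (hrec n).2
      rw [h1] at this
      linarith [this]
    set s := (1 + t) ^ γ with hs_def
    have hs0 : 0 < s := Real.rpow_pos_of_pos (by linarith) γ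
    have hs2 : s ≤ 2 ^ γ := Real.rpow_le_rpow (by linarith) (by linarith) hγ.le
    obtain ⟨hslo, hshi⟩ := bracket_lemma hγ ht ht1
    rw [← hc, ← hs_def] at hslo
    rw [← hK, ← hs_def] at hshi
    have hs1 : 1 ≤ s := by nlinarith
    have hua : a ^ (-γ) = t⁻¹ := by rw [Real.rpow_neg ha.le, ht_def]
    have hun : r n ^ (-γ) = t⁻¹ * s⁻¹ := by
      rw [hrn, Real.mul_rpow ha.le (by linarith : (0:ℝ) ≤ 1 + t),
        Real.rpow_neg ha.le, Real.rpow_neg (by linarith : (0:ℝ) ≤ 1 + t), ht_def, hs_def]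
    have hdiff : a ^ (-γ) - r n ^ (-γ) = (s - 1) / (t * s) := by
      rw [hua, hun]
      field_simp
    rw [hdiff]
    have hts : 0 < t * s := mul_pos ht hs0
    constructor
    · rw [hc₀, div_le_div_iff₀ h2γpos hts]
      nlinarith [mul_le_mul_of_nonneg_right (show c * t ≤ s - 1 by linarith) h2γpos.le,
        mul_le_mul_of_nonneg_left hs2 (mul_pos hcpos ht).le]
    · rw [div_le_iff₀ hts]
      nlinarith [mul_le_mul_of_nonneg_left hs1 (mul_pos hKpos ht).le]
  -- linear bounds on u n
  have hu : ∀ n : ℕ, 1 + c₀ * n ≤ r n ^ (-γ) ∧ r n ^ (-γ) ≤ 1 + K * n := by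
    intro n
    induction n with
    | zero => simp [h0]
    | succ n ih =>
      obtain ⟨h1, h2⟩ := hstep n
      push_cast
      constructor <;> nlinarith [ih.1, ih.2]
  -- conclude
  refine ⟨2 + c₀ ^ (-(1/γ)) + (1 + K) ^ (1/γ), ?_, ?_⟩
  · have := Real.rpow_pos_of_pos hc₀pos (-(1/γ))
    have := Real.rpow_pos_of_pos (by linarith : (0:ℝ) < 1 + K) (1/γ)
    linarith
  · intro n hn
    have hn1 : (1:ℝ) ≤ (n:ℝ) := by exact_mod_cast hn
    have hnpos : (0:ℝ) < (n:ℝ) := by linarith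
    have hnp : (0:ℝ) < (n:ℝ) ^ (-(1/γ)) := Real.rpow_pos_of_pos hnpos _
    have hinvert : r n = (r n ^ (-γ)) ^ (-(1/γ)) := by
      rw [← Real.rpow_mul (hpos n).le, show (-γ) * (-(1/γ)) = (1:ℝ) by field_simp,
        Real.rpow_one]
    have hC1 : (0:ℝ) < c₀ ^ (-(1/γ)) := Real.rpow_pos_of_pos hc₀pos _
    have hC2 : (0:ℝ) < (1 + K) ^ (1/γ) := Real.rpow_pos_of_pos (by linarith) _
    have he : -(1/γ) ≤ (0:ℝ) := neg_nonpos.mpr (by positivity)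
    constructor
    · -- lower bound
      have hub : r n ^ (-γ) ≤ (1 + K) * n := by
        have := (hu n).2
        nlinarith
      have h1 : ((1 + K) * n) ^ (-(1/γ)) ≤ r n := by
        rw [hinvert]
        exact Real.rpow_le_rpow_of_nonpos (Real.rpow_pos_of_pos (hpos n) _) hub he
      rw [Real.mul_rpow (by linarith : (0:ℝ) ≤ 1 + K) hnpos.le,
        Real.rpow_neg (by linarith : (0:ℝ) ≤ 1 + K)] at h1
      have hCle : ((1 + K) ^ (1/γ))⁻¹ * (n:ℝ) ^ (-(1/γ)) ≥
          (2 + c₀ ^ (-(1/γ)) + (1 + K) ^ (1/γ))⁻¹ * (n:ℝ) ^ (-(1/γ)) := by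
        have : (2 + c₀ ^ (-(1/γ)) + (1 + K) ^ (1/γ))⁻¹ ≤ ((1 + K) ^ (1/γ))⁻¹ := by
          apply inv_anti₀ hC2
          linarith
        exact mul_le_mul_of_nonneg_right this hnp.le
      linarith
    · -- upper bound
      have hlb : c₀ * n ≤ r n ^ (-γ) := by
        have := (hu n).1
        nlinarith
      have h1 : r n ≤ (c₀ * n) ^ (-(1/γ)) := by
        rw [hinvert]
        exact Real.rpow_le_rpow_of_nonpos (mul_pos hc₀pos hnpos) hlb he
      rw [Real.mul_rpow hc₀pos.le hnpos.le] at h1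
      have : c₀ ^ (-(1/γ)) * (n:ℝ) ^ (-(1/γ)) ≤
          (2 + c₀ ^ (-(1/γ)) + (1 + K) ^ (1/γ)) * (n:ℝ) ^ (-(1/γ)) := by
        apply mul_le_mul_of_nonneg_right _ hnp.le
        linarith
      linarith
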